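/- Let M = 2^(2λ) with λ ≥ 1, let S = {a + b·i : a, b ∈ {-(√M-1)+2n : n = 0,…,√M-1}} ⊆ ℂ be the square M-QAM signal set, ΔS = {x - x' : x, x' ∈ S} its difference constellation, and H = {d/d' : d, d' ∈ ΔS, d ≠ 0, d' ≠ 0} its set of singular fade states. Let D⁺ = {d/2 : d ∈ ΔS, Re(d) > 0, Im(d) ≥ 0}, a finite set of Gaussian integers. Then |H| = 4 + 8·k, where k is the number of 2-element subsets {α, β} of D⁺ such that α and β are coprime in the ring ℤ[i] of Gaussian integers. -/

import Mathlib

open GaussianInt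

namespace QamAux
noncomputable section
open Complex

def gii : GaussianInt := ⟨0, 1⟩

lemma gii_to : (gii : ℂ) = Complex.I := by simp [gii, toComplex_def]

lemma gii_pow4 : gii ^ 4 = 1 := by
  simp [gii, Zsqrtd.ext_iff, pow_succ, Zsqrtd.re_mul, Zsqrtd.im_mul]

lemma gii_pows : gii ^ (0:ℕ) = (⟨1,0⟩ : GaussianInt) ∧ gii ^ (1:ℕ) = (⟨0,1⟩ : GaussianInt)
    ∧ gii ^ (2:ℕ) = (⟨-1,0⟩ : GaussianInt) ∧ gii ^ (3:ℕ) = (⟨0,-1⟩ : GaussianInt) := by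
  refine ⟨rfl, ?_, ?_, ?_⟩ <;>
    simp [gii, Zsqrtd.ext_iff, pow_succ, Zsqrtd.re_mul, Zsqrtd.im_mul]

lemma isUnit_gii : IsUnit gii :=
  IsUnit.of_mul_eq_one (gii ^ 3) (by rw [← pow_succ']; exact gii_pow4)

lemma isUnit_gii_pow (n : ℕ) : IsUnit (gii ^ n) := isUnit_gii.pow n

/-- first quadrant predicate -/
def QQ (w : GaussianInt) : Prop := 1 ≤ w.re ∧ 0 ≤ w.im

lemma QQ_ne_zero {w : GaussianInt} (h : QQ w) : w ≠ 0 := by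
  intro h0; rw [h0] at h; exact absurd h.1 (by norm_num [Zsqrtd.re_zero])

lemma pow_coords (z : GaussianInt) :
    (gii ^ (0:ℕ) * z = z) ∧ (gii ^ (1:ℕ) * z = ⟨-z.im, z.re⟩) ∧
    (gii ^ (2:ℕ) * z = ⟨-z.re, -z.im⟩) ∧ (gii ^ (3:ℕ) * z = ⟨z.im, -z.re⟩) := by
  refine ⟨by simp, ?_, ?_, ?_⟩ <;>
    simp [gii, Zsqrtd.ext_iff, pow_succ, Zsqrtd.re_mul, Zsqrtd.im_mul]

lemma rot_exists (z : GaussianInt) (hz : z ≠ 0) : ∃ j : Fin 4, QQ (gii ^ (j:ℕ) * z) := by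
  obtain ⟨h0, h1, h2, h3⟩ := pow_coords z
  have hz' : ¬(z.re = 0 ∧ z.im = 0) := by
    intro h; exact hz (Zsqrtd.ext_iff.mpr ⟨h.1, by simpa using h.2⟩)
  rcases le_or_gt 0 z.im with hi | hi
  · rcases le_or_gt 1 z.re with hr | hr
    · exact ⟨⟨0, by norm_num⟩, by rw [h0]; exact ⟨hr, hi⟩⟩
    · rcases le_or_gt 1 z.im with hi2 | hi2
      · refine ⟨⟨3, by norm_num⟩, ?_⟩
        rw [h3]; exact ⟨show (1:ℤ) ≤ z.im by omega, show (0:ℤ) ≤ -z.re by omega⟩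
      · refine ⟨⟨2, by norm_num⟩, ?_⟩
        rw [h2]; exact ⟨show (1:ℤ) ≤ -z.re by omega, show (0:ℤ) ≤ -z.im by omega⟩
  · rcases le_or_gt 0 z.re with hr | hr
    · refine ⟨⟨1, by norm_num⟩, ?_⟩
      rw [h1]; exact ⟨show (1:ℤ) ≤ -z.im by omega, show (0:ℤ) ≤ z.re by omega⟩
    · refine ⟨⟨2, by norm_num⟩, ?_⟩
      rw [h2]; exact ⟨show (1:ℤ) ≤ -z.re by omega, show (0:ℤ) ≤ -z.im by omega⟩

lemma rot_unique {w : GaussianInt} (hw : QQ w) {j : Fin 4} (h : QQ (gii ^ (j:ℕ) * w)) :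
    j = 0 := by
  obtain ⟨h0, h1, h2, h3⟩ := pow_coords w
  obtain ⟨ha, hb⟩ := hw
  rcases j with ⟨jv, hj⟩
  interval_cases jv
  · rfl
  · have h' : QQ (gii ^ (1:ℕ) * w) := h
    rw [h1] at h'
    exact absurd (show (1:ℤ) ≤ -w.im from h'.1) (by omega)
  · have h' : QQ (gii ^ (2:ℕ) * w) := h
    rw [h2] at h'
    exact absurd (show (1:ℤ) ≤ -w.re from h'.1) (by omega)
  · have h' : QQ (gii ^ (3:ℕ) * w) := h
    rw [h3] at h'
    exact absurd (show (0:ℤ) ≤ -w.re from h'.2) (by omega)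

lemma norm_coords (z : GaussianInt) : z.norm = z.re * z.re + z.im * z.im := by
  unfold Zsqrtd.norm; ring_nf

lemma unit_eq_gii_pow {u : GaussianInt} (h : IsUnit u) : ∃ j : Fin 4, u = gii ^ (j:ℕ) := by
  have hn : u.norm.natAbs = 1 := Zsqrtd.norm_eq_one_iff.mpr h
  obtain ⟨a, b⟩ := u
  have hnorm := norm_coords ⟨a, b⟩
  rw [hnorm] at hn
  have hpos : 0 ≤ a * a + b * b := add_nonneg (mul_self_nonneg a) (mul_self_nonneg b)
  have h1 : a * a + b * b = 1 := by
    set s := a * a + b * b with hs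
    omega
  have ha : -1 ≤ a ∧ a ≤ 1 := ⟨by nlinarith, by nlinarith⟩
  have hb : -1 ≤ b ∧ b ≤ 1 := ⟨by nlinarith, by nlinarith⟩
  obtain ⟨ha1, ha2⟩ := ha; obtain ⟨hb1, hb2⟩ := hb
  obtain ⟨g0, g1, g2, g3⟩ := gii_pows
  interval_cases a <;> interval_cases b <;> first
    | (exfalso; omega)
    | exact ⟨⟨0, by norm_num⟩, g0.symm⟩
    | exact ⟨⟨1, by norm_num⟩, g1.symm⟩
    | exact ⟨⟨2, by norm_num⟩, g2.symm⟩
    | exact ⟨⟨3, by norm_num⟩, g3.symm⟩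


lemma dvd_unit_mul {u a b : GaussianInt} (hu : IsUnit u) : a ∣ u * b ↔ a ∣ b := by
  constructor
  · intro h
    obtain ⟨v, hv⟩ := hu.exists_left_inv
    have : a ∣ v * (u * b) := h.mul_left v
    rwa [← mul_assoc, hv, one_mul] at this
  · exact fun h => h.mul_left u

lemma QQ_assoc_eq {w w' : GaussianInt} (hw : QQ w) (hw' : QQ w') (h : Associated w w') :
    w = w' := by
  obtain ⟨u, hu⟩ := h
  obtain ⟨j, hj⟩ := unit_eq_gii_pow u.isUnit
  have : QQ (gii ^ (j:ℕ) * w) := by rwa [← hj, mul_comm, hu]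
  have hj0 : j = 0 := rot_unique hw this
  rw [← hu, hj, hj0]
  simp

lemma divisor_small {N : ℤ} (hN : 0 ≤ N) {a γ : GaussianInt} (ha : a ≠ 0)
    (h1 : |a.re| ≤ N) (h2 : |a.im| ≤ N) (hd : γ ∣ a) (hQ : QQ γ) :
    γ.re ≤ N ∧ γ.im ≤ N := by
  rw [abs_le] at h1 h2
  obtain ⟨t, hat⟩ := hd
  have ht0 : t ≠ 0 := by rintro rfl; rw [mul_zero] at hat; exact ha hat
  by_cases hu : IsUnit t
  · obtain ⟨j, hj⟩ := unit_eq_gii_pow hu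
    subst hj hat
    obtain ⟨h0, hh1, hh2, hh3⟩ := pow_coords γ
    rcases j with ⟨jv, hjv⟩
    interval_cases jv
    · rw [mul_comm, show ((⟨0, by norm_num⟩ : Fin 4) : ℕ) = 0 from rfl, h0] at h1 h2
      exact ⟨h1.2, h2.2⟩
    · rw [mul_comm, show ((⟨1, by norm_num⟩ : Fin 4) : ℕ) = 1 from rfl, hh1] at h1 h2
      have e1 : -N ≤ -γ.im ∧ -γ.im ≤ N := h1
      have e2 : -N ≤ γ.re ∧ γ.re ≤ N := h2
      exact ⟨e2.2, by omega⟩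
    · rw [mul_comm, show ((⟨2, by norm_num⟩ : Fin 4) : ℕ) = 2 from rfl, hh2] at h1 h2
      have e1 : -N ≤ -γ.re ∧ -γ.re ≤ N := h1
      have e2 : -N ≤ -γ.im ∧ -γ.im ≤ N := h2
      exact ⟨by omega, by omega⟩
    · rw [mul_comm, show ((⟨3, by norm_num⟩ : Fin 4) : ℕ) = 3 from rfl, hh3] at h1 h2
      have e1 : -N ≤ γ.im ∧ γ.im ≤ N := h1
      have e2 : -N ≤ -γ.re ∧ -γ.re ≤ N := h2
      exact ⟨by omega, e1.2⟩
  · -- t is not a unit, so its norm is at least 2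
    have htn0 : t.norm ≠ 0 := fun h => ht0 (((Zsqrtd.norm_eq_zero_iff (by norm_num) t).mp h))
    have htnn : 0 ≤ t.norm := Zsqrtd.norm_nonneg (by norm_num) t
    have htn1 : t.norm ≠ 1 := by
      intro h
      exact hu (Zsqrtd.norm_eq_one_iff.mp (by rw [h]; rfl))
    have ht2 : 2 ≤ t.norm := by omega
    have hmul : a.norm = γ.norm * t.norm := by rw [hat, Zsqrtd.norm_mul]
    have hga : a.norm = a.re * a.re + a.im * a.im := norm_coords a
    have hgg : γ.norm = γ.re * γ.re + γ.im * γ.im := norm_coords γ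
    have hgn : 0 ≤ γ.norm := Zsqrtd.norm_nonneg (by norm_num) γ
    have hbound : a.norm ≤ 2 * N ^ 2 := by nlinarith [h1.1, h1.2, h2.1, h2.2]
    have hγbound : γ.norm ≤ N ^ 2 := by nlinarith
    obtain ⟨hre, him⟩ := hQ
    constructor <;> nlinarith

/-- reduction to coprime pair via gcd -/
lemma reduce (a b : GaussianInt) (hb : b ≠ 0) :
    ∃ g a₁ b₁ : GaussianInt, g ≠ 0 ∧ a = g * a₁ ∧ b = g * b₁ ∧ IsCoprime a₁ b₁ := by
  classical
  have hg : EuclideanDomain.gcd a b ≠ 0 :=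
    fun h => hb ((EuclideanDomain.gcd_eq_zero_iff).mp h).2
  refine ⟨EuclideanDomain.gcd a b, a / EuclideanDomain.gcd a b, b / EuclideanDomain.gcd a b,
    hg, (EuclideanDomain.mul_div_cancel' hg (EuclideanDomain.gcd_dvd_left a b)).symm,
    (EuclideanDomain.mul_div_cancel' hg (EuclideanDomain.gcd_dvd_right a b)).symm, ?_⟩
  have hbez := EuclideanDomain.gcd_eq_gcd_ab a b
  set g := EuclideanDomain.gcd a b with hgdef
  set x := EuclideanDomain.gcdA a b
  set y := EuclideanDomain.gcdB a b
  have h1 : g * 1 = g * ((a / g) * x + (b / g) * y) := by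
    rw [mul_one, mul_add]
    rw [← mul_assoc, ← mul_assoc,
      EuclideanDomain.mul_div_cancel' hg (EuclideanDomain.gcd_dvd_left a b),
      EuclideanDomain.mul_div_cancel' hg (EuclideanDomain.gcd_dvd_right a b)]
    exact hbez
  have h2 : (a / g) * x + (b / g) * y = 1 := (mul_left_cancel₀ hg h1).symm
  exact ⟨x, y, by rw [mul_comm x _, mul_comm y _]; exact h2⟩

lemma gii_pow_inj {j j' : Fin 4} (h : gii ^ (j:ℕ) = gii ^ (j':ℕ)) : j = j' := by
  obtain ⟨g0, g1, g2, g3⟩ := gii_pows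
  rcases j with ⟨a, hja⟩; rcases j' with ⟨b, hjb⟩
  interval_cases a <;> interval_cases b <;>
    simp_all [Zsqrtd.ext_iff]

lemma rot_eq_rot {j j' : Fin 4} {γ δ : GaussianInt} (hγ : QQ γ) (hδ : QQ δ)
    (h : gii ^ (j:ℕ) * γ = gii ^ (j':ℕ) * δ) : γ = δ ∧ j = j' := by
  have hj4 : (j:ℕ) < 4 := j.isLt
  have hj'4 : (j':ℕ) < 4 := j'.isLt
  have h1 : δ = γ * (gii ^ (4-(j':ℕ)) * gii ^ (j:ℕ)) := by
    calc δ = (gii ^ (4-(j':ℕ)) * gii ^ (j':ℕ)) * δ := by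
            rw [← pow_add, show (4-(j':ℕ)) + (j':ℕ) = 4 by omega, gii_pow4, one_mul]
      _ = gii ^ (4-(j':ℕ)) * (gii ^ (j:ℕ) * γ) := by rw [mul_assoc, ← h]
      _ = γ * (gii ^ (4-(j':ℕ)) * gii ^ (j:ℕ)) := by ring
  have h2 : γ = δ * (gii ^ (4-(j:ℕ)) * gii ^ (j':ℕ)) := by
    calc γ = (gii ^ (4-(j:ℕ)) * gii ^ (j:ℕ)) * γ := by
            rw [← pow_add, show (4-(j:ℕ)) + (j:ℕ) = 4 by omega, gii_pow4, one_mul]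
      _ = gii ^ (4-(j:ℕ)) * (gii ^ (j':ℕ) * δ) := by rw [mul_assoc, h]
      _ = δ * (gii ^ (4-(j:ℕ)) * gii ^ (j':ℕ)) := by ring
  have hγδ : γ = δ := QQ_assoc_eq hγ hδ (associated_of_dvd_dvd ⟨_, h1⟩ ⟨_, h2⟩)
  subst hγδ
  have hcancel : gii ^ (j:ℕ) = gii ^ (j':ℕ) := mul_right_cancel₀ (QQ_ne_zero hγ) h
  exact ⟨rfl, gii_pow_inj hcancel⟩

lemma I_pow_emod (n : ℕ) : Complex.I ^ n = Complex.I ^ (n % 4) := by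
  conv_lhs => rw [← Nat.div_add_mod n 4]
  rw [pow_add, pow_mul, Complex.I_pow_four, one_pow, one_mul]

lemma gii_pow_emod (n : ℕ) : gii ^ n = gii ^ (n % 4) := by
  conv_lhs => rw [← Nat.div_add_mod n 4]
  rw [pow_add, pow_mul, gii_pow4, one_pow, one_mul]

end
end QamAux

open QamAux GaussianInt in
open scoped Classical in
theorem qam_card_singular_fade_states (l : ℕ) (hl : 1 ≤ l)
    (S : Finset ℂ)
    (hS : S = ((Finset.range (2 ^ l)) ×ˢ (Finset.range (2 ^ l))).image
      (fun p : ℕ × ℕ =>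
        (2 * (p.1 : ℂ) - ((2 : ℂ) ^ l - 1)) + (2 * (p.2 : ℂ) - ((2 : ℂ) ^ l - 1)) * Complex.I))
    (ΔS : Finset ℂ)
    (hΔS : ΔS = (S ×ˢ S).image (fun p : ℂ × ℂ => p.1 - p.2))
    (H : Finset ℂ)
    (hH : H = ((ΔS ×ˢ ΔS).filter (fun p : ℂ × ℂ => p.1 ≠ 0 ∧ p.2 ≠ 0)).image
      (fun p : ℂ × ℂ => p.1 / p.2))
    (Dplus : Finset GaussianInt)
    (hD : ∀ g : GaussianInt, g ∈ Dplus ↔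
      (∃ d ∈ ΔS, 0 < d.re ∧ 0 ≤ d.im ∧ GaussianInt.toComplex g = d / 2))
    (k : ℕ)
    (hk : k = ((Dplus.powersetCard 2).filter
      (fun t : Finset GaussianInt => ∃ α ∈ t, ∃ β ∈ t, α ≠ β ∧ IsCoprime α β)).card) :
    H.card = 4 + 8 * k := by
  classical
  obtain ⟨g0, g1, g2, g3⟩ := QamAux.gii_pows
  set nn : ℕ := 2 ^ l with hnn
  have hnn2 : 2 ≤ nn := by
    have h1 : 1 < 2 ^ l := Nat.one_lt_two_pow_iff.mpr (by omega)
    omega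
  set N : ℤ := (nn : ℤ) - 1 with hN
  have hN1 : 1 ≤ N := by omega
  -- membership in S
  have hmemS : ∀ x : ℂ, x ∈ S ↔ ∃ a b : ℕ, a < nn ∧ b < nn ∧
      x = (2*(a:ℂ) - ((2:ℂ)^l - 1)) + (2*(b:ℂ) - ((2:ℂ)^l - 1))*Complex.I := by
    intro x
    rw [hS]
    simp only [Finset.mem_image, Finset.mem_product, Finset.mem_range, Prod.exists]
    constructor
    · rintro ⟨a, b, ⟨ha, hb⟩, rfl⟩; exact ⟨a, b, ha, hb, rfl⟩
    · rintro ⟨a, b, ha, hb, rfl⟩; exact ⟨a, b, ⟨ha, hb⟩, rfl⟩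
  -- membership in ΔS
  have hmemD : ∀ d : ℂ, d ∈ ΔS ↔
      ∃ z : GaussianInt, |z.re| ≤ N ∧ |z.im| ≤ N ∧ d = 2 * (z : ℂ) := by
    intro d
    rw [hΔS]
    simp only [Finset.mem_image, Finset.mem_product, Prod.exists]
    constructor
    · rintro ⟨x, y, ⟨hx, hy⟩, rfl⟩
      rw [hmemS] at hx hy
      obtain ⟨a1, b1, ha1, hb1, rfl⟩ := hx
      obtain ⟨a2, b2, ha2, hb2, rfl⟩ := hy
      refine ⟨⟨(a1:ℤ) - a2, (b1:ℤ) - b2⟩, ?_, ?_, ?_⟩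
      · rw [abs_le]; constructor <;> simp only [Zsqrtd.ext_iff] <;> omega
      · rw [abs_le]; constructor <;> simp only [Zsqrtd.ext_iff] <;> omega
      · rw [toComplex_def]
        push_cast
        ring
    · rintro ⟨z, h1, h2, rfl⟩
      rw [abs_le] at h1 h2
      refine ⟨(2*((z.re.toNat:ℕ):ℂ) - ((2:ℂ)^l - 1)) + (2*((z.im.toNat:ℕ):ℂ) - ((2:ℂ)^l - 1))*Complex.I,
              (2*(((-z.re).toNat:ℕ):ℂ) - ((2:ℂ)^l - 1)) + (2*(((-z.im).toNat:ℕ):ℂ) - ((2:ℂ)^l - 1))*Complex.I,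
              ⟨?_, ?_⟩, ?_⟩
      · rw [hmemS]; exact ⟨z.re.toNat, z.im.toNat, by omega, by omega, rfl⟩
      · rw [hmemS]; exact ⟨(-z.re).toNat, (-z.im).toNat, by omega, by omega, rfl⟩
      · have e1 : ((z.re.toNat:ℕ):ℂ) - (((-z.re).toNat:ℕ):ℂ) = ((z.re:ℤ):ℂ) := by
          have : ((z.re.toNat:ℤ)) - (((-z.re).toNat:ℤ)) = z.re := by omega
          exact_mod_cast congrArg (Int.cast : ℤ → ℂ) this
        have e2 : ((z.im.toNat:ℕ):ℂ) - (((-z.im).toNat:ℕ):ℂ) = ((z.im:ℤ):ℂ) := by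
          have : ((z.im.toNat:ℤ)) - (((-z.im).toNat:ℤ)) = z.im := by omega
          exact_mod_cast congrArg (Int.cast : ℤ → ℂ) this
        rw [toComplex_def]
        linear_combination (2:ℂ) * e1 + (2*Complex.I) * e2
  -- membership in H
  have hmemH : ∀ h : ℂ, h ∈ H ↔ ∃ a b : GaussianInt,
      (|a.re| ≤ N ∧ |a.im| ≤ N ∧ a ≠ 0) ∧ (|b.re| ≤ N ∧ |b.im| ≤ N ∧ b ≠ 0) ∧
      h = (a:ℂ)/(b:ℂ) := by
    intro h
    rw [hH]
    simp only [Finset.mem_image, Finset.mem_filter, Finset.mem_product, Prod.exists]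
    constructor
    · rintro ⟨d1, d2, ⟨⟨hd1, hd2⟩, hne1, hne2⟩, rfl⟩
      rw [hmemD] at hd1 hd2
      obtain ⟨a, ha1, ha2, rfl⟩ := hd1
      obtain ⟨b, hb1, hb2, rfl⟩ := hd2
      have ha0 : a ≠ 0 := by rintro rfl; simp at hne1
      have hb0 : b ≠ 0 := by rintro rfl; simp at hne2
      refine ⟨a, b, ⟨ha1, ha2, ha0⟩, ⟨hb1, hb2, hb0⟩, ?_⟩
      rw [mul_div_mul_left _ _ (two_ne_zero)]
    · rintro ⟨a, b, ⟨ha1, ha2, ha0⟩, ⟨hb1, hb2, hb0⟩, rfl⟩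
      refine ⟨2*(a:ℂ), 2*(b:ℂ), ⟨⟨?_, ?_⟩, ?_, ?_⟩, ?_⟩
      · rw [hmemD]; exact ⟨a, ha1, ha2, rfl⟩
      · rw [hmemD]; exact ⟨b, hb1, hb2, rfl⟩
      · simp [ha0]
      · simp [hb0]
      · rw [mul_div_mul_left _ _ (two_ne_zero)]
  -- membership in Dplus
  have hmemP : ∀ g : GaussianInt, g ∈ Dplus ↔
      (1 ≤ g.re ∧ g.re ≤ N ∧ 0 ≤ g.im ∧ g.im ≤ N) := by
    intro g
    rw [hD g]
    constructor
    · rintro ⟨d, hd, hre, him, heq⟩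
      rw [hmemD] at hd
      obtain ⟨z, h1, h2, rfl⟩ := hd
      have hzg : g = z := by
        have : (g:ℂ) = (z:ℂ) := by rw [heq]; ring
        exact toComplex_inj.mp this
      subst hzg
      rw [abs_le] at h1 h2
      have hre' : (0:ℝ) < ((g.re:ℤ):ℝ) := by
        have := hre
        simp only [Complex.mul_re, Complex.ofReal_re] at this
        simpa [GaussianInt.intCast_re, Complex.mul_re] using hre
      have him' : (0:ℝ) ≤ ((g.im:ℤ):ℝ) := by
        simpa [GaussianInt.intCast_im, Complex.mul_im] using him
      have hre2 : 0 < g.re := by exact_mod_cast hre'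
      have him2 : 0 ≤ g.im := by exact_mod_cast him'
      exact ⟨by omega, by omega, him2, by omega⟩
    · rintro ⟨hg1, hg2, hg3, hg4⟩
      refine ⟨2*(g:ℂ), ?_, ?_, ?_, ?_⟩
      · rw [hmemD]; exact ⟨g, by rw [abs_le]; omega, by rw [abs_le]; omega, rfl⟩
      · have : (0:ℝ) < ((g.re:ℤ):ℝ) := by exact_mod_cast hg1
        simpa [GaussianInt.intCast_re, Complex.mul_re] using this
      · have : (0:ℝ) ≤ ((g.im:ℤ):ℝ) := by exact_mod_cast hg3
        simpa [GaussianInt.intCast_im, Complex.mul_im] using this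
      · ring
  -- properties of Dplus elements
  have hDQ : ∀ g ∈ Dplus, QamAux.QQ g ∧ |g.re| ≤ N ∧ |g.im| ≤ N ∧ g ≠ 0 := by
    intro g hg
    rw [hmemP] at hg
    obtain ⟨h1, h2, h3, h4⟩ := hg
    have hQ : QamAux.QQ g := ⟨h1, h3⟩
    exact ⟨hQ, by rw [abs_le]; omega, by rw [abs_le]; omega, QamAux.QQ_ne_zero hQ⟩
  -- the sets A and B
  set A : Finset ℂ := Finset.image (fun j : Fin 4 => Complex.I ^ (j:ℕ)) Finset.univ with hA
  set P : Finset (GaussianInt × GaussianInt) :=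
    (Dplus ×ˢ Dplus).filter (fun p => p.1 ≠ p.2 ∧ IsCoprime p.1 p.2) with hP
  set B : Finset ℂ := Finset.image
    (fun q : Fin 4 × (GaussianInt × GaussianInt) =>
      Complex.I ^ (q.1:ℕ) * ((q.2.1 : ℂ) / (q.2.2 : ℂ)))
    (Finset.univ ×ˢ P) with hB
  -- transfer of multiplicative identities to ℂ
  have hIC : ∀ (m : ℕ) (x y z w : GaussianInt), x * y = QamAux.gii ^ m * z * w →
      (x:ℂ) * (y:ℂ) = Complex.I ^ m * (z:ℂ) * (w:ℂ) := by
    intro m x y z w hxy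
    have := congrArg (GaussianInt.toComplex) hxy
    simpa [map_mul, map_pow, QamAux.gii_to] using this
  have hCI : ∀ (m m' : ℕ) (x y z w : GaussianInt),
      Complex.I ^ m * (x:ℂ) * (y:ℂ) = Complex.I ^ m' * (z:ℂ) * (w:ℂ) →
      QamAux.gii ^ m * x * y = QamAux.gii ^ m' * z * w := by
    intro m m' x y z w hxy
    apply toComplex_inj.mp
    simpa [map_mul, map_pow, QamAux.gii_to] using hxy
  -- H = A ∪ B
  have hHAB : H = A ∪ B := by
    ext h
    rw [Finset.mem_union, hmemH]
    constructor
    · rintro ⟨a, b, ⟨ha1, ha2, ha0⟩, ⟨hb1, hb2, hb0⟩, rfl⟩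
      obtain ⟨g, a₁, b₁, hg0, hae, hbe, hcop⟩ := QamAux.reduce a b hb0
      have ha₁0 : a₁ ≠ 0 := by rintro rfl; rw [mul_zero] at hae; exact ha0 hae
      have hb₁0 : b₁ ≠ 0 := by rintro rfl; rw [mul_zero] at hbe; exact hb0 hbe
      obtain ⟨j₁, hQ1⟩ := QamAux.rot_exists a₁ ha₁0
      obtain ⟨j₂, hQ2⟩ := QamAux.rot_exists b₁ hb₁0
      set γ : GaussianInt := QamAux.gii ^ (j₁:ℕ) * a₁ with hγ
      set δ : GaussianInt := QamAux.gii ^ (j₂:ℕ) * b₁ with hδ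
      have hj₁4 : (j₁:ℕ) < 4 := j₁.isLt
      have hj₂4 : (j₂:ℕ) < 4 := j₂.isLt
      have hinv1 : a₁ = QamAux.gii ^ (4-(j₁:ℕ)) * γ := by
        rw [hγ, ← mul_assoc, ← pow_add]
        rw [show (4-(j₁:ℕ)) + (j₁:ℕ) = 4 by omega, QamAux.gii_pow4, one_mul]
      have hinv2 : b₁ = QamAux.gii ^ (4-(j₂:ℕ)) * δ := by
        rw [hδ, ← mul_assoc, ← pow_add]
        rw [show (4-(j₂:ℕ)) + (j₂:ℕ) = 4 by omega, QamAux.gii_pow4, one_mul]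
      have hdvd1 : γ ∣ a := ⟨QamAux.gii ^ (4-(j₁:ℕ)) * g, by rw [hae, hinv1]; ring⟩
      have hdvd2 : δ ∣ b := ⟨QamAux.gii ^ (4-(j₂:ℕ)) * g, by rw [hbe, hinv2]; ring⟩
      have hγD : γ ∈ Dplus := by
        rw [hmemP]
        have := QamAux.divisor_small (by omega) ha0 ha1 ha2 hdvd1 hQ1
        exact ⟨hQ1.1, this.1, hQ1.2, this.2⟩
      have hδD : δ ∈ Dplus := by
        rw [hmemP]
        have := QamAux.divisor_small (by omega) hb0 hb1 hb2 hdvd2 hQ2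
        exact ⟨hQ2.1, this.1, hQ2.2, this.2⟩
      have hcop' : IsCoprime γ δ := by
        rw [hγ, hδ]
        rw [isCoprime_mul_unit_left_left (QamAux.isUnit_gii_pow _) _ _,
           isCoprime_mul_unit_left_right (QamAux.isUnit_gii_pow _) _ _]
        exact hcop
      set m : ℕ := (4 - (j₁:ℕ) + (j₂:ℕ)) % 4 with hm
      have hgauss : a * δ = QamAux.gii ^ m * γ * b := by
        have hpows : QamAux.gii ^ m * QamAux.gii ^ (j₁:ℕ) = QamAux.gii ^ (j₂:ℕ) := by
          rw [← pow_add, QamAux.gii_pow_emod (m + (j₁:ℕ)), QamAux.gii_pow_emod (j₂:ℕ)]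
          congr 1
          omega
        rw [hae, hbe, hγ, hδ, ← hpows]
        ring
      have hδ0 : δ ≠ 0 := QamAux.QQ_ne_zero hQ2
      have hδC : (δ:ℂ) ≠ 0 := fun hc => hδ0 (toComplex_eq_zero.mp hc)
      have hbC : (b:ℂ) ≠ 0 := fun hc => hb0 (toComplex_eq_zero.mp hc)
      have hval : (a:ℂ)/(b:ℂ) = Complex.I ^ m * ((γ:ℂ)/(δ:ℂ)) := by
        have h' := hIC m a δ γ b hgauss
        field_simp
        linear_combination h'
      by_cases hγδ : γ = δ
      · left
        rw [hA, Finset.mem_image]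
        refine ⟨⟨m, Nat.mod_lt _ (by norm_num)⟩, Finset.mem_univ _, ?_⟩
        rw [hval, hγδ, div_self hδC, mul_one]
      · right
        rw [hB, Finset.mem_image]
        refine ⟨⟨⟨m, Nat.mod_lt _ (by norm_num)⟩, (γ, δ)⟩, ?_, ?_⟩
        · rw [Finset.mem_product, hP, Finset.mem_filter, Finset.mem_product]
          exact ⟨Finset.mem_univ _, ⟨hγD, hδD⟩, hγδ, hcop'⟩
        · rw [hval]
    · intro hAB
      rcases hAB with hA' | hB'
      · rw [hA, Finset.mem_image] at hA'
        obtain ⟨j, _, rfl⟩ := hA'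
        refine ⟨QamAux.gii ^ (j:ℕ), 1, ⟨?_, ?_, (QamAux.isUnit_gii_pow _).ne_zero⟩,
          ⟨?_, ?_, one_ne_zero⟩, ?_⟩
        · rcases j with ⟨jv, hj⟩
          interval_cases jv <;>
            simp only [g0, g1, g2, g3] <;> rw [abs_le] <;> constructor <;> omega
        · rcases j with ⟨jv, hj⟩
          interval_cases jv <;>
            simp only [g0, g1, g2, g3] <;> rw [abs_le] <;> constructor <;> omega
        · rw [show ((1:GaussianInt)).re = 1 from rfl, abs_le]; omega
        · rw [show ((1:GaussianInt)).im = 0 from rfl, abs_le]; omega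
        · simp [map_pow, QamAux.gii_to]
      · rw [hB, Finset.mem_image] at hB'
        obtain ⟨⟨j, γ, δ⟩, hmem, rfl⟩ := hB'
        rw [Finset.mem_product, hP, Finset.mem_filter, Finset.mem_product] at hmem
        obtain ⟨-, ⟨hγD, hδD⟩, hne, hcop⟩ := hmem
        obtain ⟨hQγ, haγ1, haγ2, hγ0⟩ := hDQ γ hγD
        obtain ⟨hQδ, haδ1, haδ2, hδ0⟩ := hDQ δ hδD
        refine ⟨QamAux.gii ^ (j:ℕ) * γ, δ, ⟨?_, ?_, mul_ne_zero (QamAux.isUnit_gii_pow _).ne_zero hγ0⟩,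
          ⟨haδ1, haδ2, hδ0⟩, ?_⟩
        · obtain ⟨c0, c1, c2, c3⟩ := QamAux.pow_coords γ
          rw [abs_le] at haγ1 haγ2
          rcases j with ⟨jv, hj⟩
          interval_cases jv
          · rw [c0, abs_le]; omega
          · rw [c1]; show |(-γ.im)| ≤ N; rw [abs_le]; omega
          · rw [c2]; show |(-γ.re)| ≤ N; rw [abs_le]; omega
          · rw [c3]; show |(γ.im)| ≤ N; rw [abs_le]; omega
        · obtain ⟨c0, c1, c2, c3⟩ := QamAux.pow_coords γ
          rw [abs_le] at haγ1 haγ2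
          rcases j with ⟨jv, hj⟩
          interval_cases jv
          · rw [c0, abs_le]; omega
          · rw [c1]; show |(γ.re)| ≤ N; rw [abs_le]; omega
          · rw [c2]; show |(-γ.im)| ≤ N; rw [abs_le]; omega
          · rw [c3]; show |(-γ.re)| ≤ N; rw [abs_le]; omega
        · rw [map_mul, map_pow, QamAux.gii_to, mul_div_assoc]
  -- A and B are disjoint
  have hdisj : Disjoint A B := by
    rw [Finset.disjoint_left]
    rintro x hxA hxB
    rw [hA, Finset.mem_image] at hxA
    rw [hB, Finset.mem_image] at hxB
    obtain ⟨j, -, rfl⟩ := hxA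
    obtain ⟨⟨j', γ, δ⟩, hmem, hval⟩ := hxB
    rw [Finset.mem_product, hP, Finset.mem_filter, Finset.mem_product] at hmem
    obtain ⟨-, ⟨hγD, hδD⟩, hne, hcop⟩ := hmem
    obtain ⟨hQγ, -, -, hγ0⟩ := hDQ γ hγD
    obtain ⟨hQδ, -, -, hδ0⟩ := hDQ δ hδD
    have hδC : (δ:ℂ) ≠ 0 := fun hc => hδ0 (toComplex_eq_zero.mp hc)
    have hCeq : Complex.I ^ ((j':Fin 4):ℕ) * (γ:ℂ) * ((1:GaussianInt):ℂ)
        = Complex.I ^ ((j:Fin 4):ℕ) * (δ:ℂ) * ((1:GaussianInt):ℂ) := by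
      rw [map_one, mul_one, mul_one]
      field_simp at hval
      linear_combination hval
    have hGeq := hCI _ _ _ _ _ _ hCeq
    rw [mul_one, mul_one] at hGeq
    exact hne (QamAux.rot_eq_rot hQγ hQδ hGeq).1
  -- cardinality of A
  have hcardA : A.card = 4 := by
    rw [hA, Finset.card_image_of_injOn, Finset.card_univ, Fintype.card_fin]
    intro j _ j' _ h
    rcases j with ⟨a, ha⟩; rcases j' with ⟨b, hb⟩
    interval_cases a <;> interval_cases b <;> first
      | rfl
      | (exfalso; revert h;
         norm_num [pow_succ, Complex.ext_iff, Complex.mul_re, Complex.mul_im])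
  -- cardinality of B
  have hcardB : B.card = 4 * P.card := by
    rw [hB, Finset.card_image_of_injOn, Finset.card_product, Finset.card_univ,
      Fintype.card_fin]
    rintro ⟨j, γ, δ⟩ hq ⟨j', γ', δ'⟩ hq' heq
    rw [Finset.mem_coe, Finset.mem_product, hP, Finset.mem_filter, Finset.mem_product] at hq hq'
    obtain ⟨-, ⟨hγD, hδD⟩, hne, hcop⟩ := hq
    obtain ⟨-, ⟨hγD', hδD'⟩, hne', hcop'⟩ := hq'
    obtain ⟨hQγ, -, -, hγ0⟩ := hDQ γ hγD
    obtain ⟨hQδ, -, -, hδ0⟩ := hDQ δ hδD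
    obtain ⟨hQγ', -, -, hγ0'⟩ := hDQ γ' hγD'
    obtain ⟨hQδ', -, -, hδ0'⟩ := hDQ δ' hδD'
    have hδC : (δ:ℂ) ≠ 0 := fun hc => hδ0 (toComplex_eq_zero.mp hc)
    have hδC' : (δ':ℂ) ≠ 0 := fun hc => hδ0' (toComplex_eq_zero.mp hc)
    simp only at heq
    have hCeq : Complex.I ^ ((j:Fin 4):ℕ) * (γ:ℂ) * (δ':ℂ)
        = Complex.I ^ ((j':Fin 4):ℕ) * (γ':ℂ) * (δ:ℂ) := by
      field_simp at heq
      linear_combination heq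
    have hGeq := hCI _ _ _ _ _ _ hCeq
    have d1 : γ ∣ γ' * δ := by
      have hd : γ ∣ QamAux.gii ^ ((j':Fin 4):ℕ) * (γ' * δ) := by
        refine ⟨QamAux.gii ^ ((j:Fin 4):ℕ) * δ', ?_⟩
        rw [← mul_assoc, ← hGeq]; ring
      exact (QamAux.dvd_unit_mul (QamAux.isUnit_gii_pow _)).mp hd
    have d2 : γ' ∣ γ * δ' := by
      have hd : γ' ∣ QamAux.gii ^ ((j:Fin 4):ℕ) * (γ * δ') := by
        refine ⟨QamAux.gii ^ ((j':Fin 4):ℕ) * δ, ?_⟩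
        rw [← mul_assoc, hGeq]; ring
      exact (QamAux.dvd_unit_mul (QamAux.isUnit_gii_pow _)).mp hd
    have hγγ' : γ = γ' := QamAux.QQ_assoc_eq hQγ hQγ'
      (associated_of_dvd_dvd (hcop.dvd_of_dvd_mul_right d1) (hcop'.dvd_of_dvd_mul_right d2))
    subst hγγ'
    have hc2 : QamAux.gii ^ ((j:Fin 4):ℕ) * δ' = QamAux.gii ^ ((j':Fin 4):ℕ) * δ := by
      apply mul_right_cancel₀ hγ0
      linear_combination hGeq
    obtain ⟨hδδ', hjj'⟩ := QamAux.rot_eq_rot hQδ' hQδ hc2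
    simp [Prod.ext_iff, hδδ', hjj']
  -- cardinality of P
  have hPcard : P.card = 2 * k := by
    set F : Finset (Finset GaussianInt) := (Dplus.powersetCard 2).filter
      (fun t : Finset GaussianInt => ∃ α ∈ t, ∃ β ∈ t, α ≠ β ∧ IsCoprime α β) with hF
    have htwo : ∀ t ∈ F, t.card = 2 := by
      intro t ht
      rw [hF, Finset.mem_filter, Finset.mem_powersetCard] at ht
      exact ht.1.2
    have hfix : ∀ (t : Finset GaussianInt), t.card = 2 →
        ∀ p : GaussianInt × GaussianInt, p ∈ t.offDiag → t = {p.1, p.2} := by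
      intro t hc p hp
      rw [Finset.mem_offDiag] at hp
      refine (Finset.eq_of_subset_of_card_le ?_ ?_).symm
      · intro x hx
        rcases Finset.mem_insert.mp hx with h | h
        · exact h ▸ hp.1
        · exact (Finset.mem_singleton.mp h) ▸ hp.2.1
      · rw [hc, Finset.card_insert_of_notMem (by simp [hp.2.2]), Finset.card_singleton]
    have hPF : P = F.biUnion (fun t => t.offDiag) := by
      ext p
      rw [hP, Finset.mem_filter, Finset.mem_product, Finset.mem_biUnion]
      constructor
      · rintro ⟨⟨h1, h2⟩, hne, hcop⟩
        refine ⟨{p.1, p.2}, ?_, ?_⟩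
        · rw [hF, Finset.mem_filter, Finset.mem_powersetCard]
          refine ⟨⟨?_, ?_⟩, p.1, by simp, p.2, by simp, hne, hcop⟩
          · intro x hx
            rcases Finset.mem_insert.mp hx with h | h
            · exact h ▸ h1
            · exact (Finset.mem_singleton.mp h) ▸ h2
          · rw [Finset.card_insert_of_notMem (by simp [hne]), Finset.card_singleton]
        · rw [Finset.mem_offDiag]; exact ⟨by simp, by simp, hne⟩
      · rintro ⟨t, htF, hpt⟩
        have ht2 := htwo t htF
        have ht := hfix t ht2 p hpt
        rw [hF, Finset.mem_filter, Finset.mem_powersetCard] at htF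
        obtain ⟨⟨hsub, -⟩, α, hα, β, hβ, hαβ, hcop⟩ := htF
        rw [Finset.mem_offDiag] at hpt
        obtain ⟨hp1, hp2, hpne⟩ := hpt
        refine ⟨⟨hsub hp1, hsub hp2⟩, hpne, ?_⟩
        rw [ht] at hα hβ
        have hα' : α = p.1 ∨ α = p.2 := by simpa using hα
        have hβ' : β = p.1 ∨ β = p.2 := by simpa using hβ
        rcases hα' with ha | ha <;> rcases hβ' with hb | hb
        · exact absurd (ha.trans hb.symm) hαβ
        · rw [ha, hb] at hcop; exact hcop
        · rw [ha, hb] at hcop; exact hcop.symm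
        · exact absurd (ha.trans hb.symm) hαβ
    have hdisjF : ∀ t ∈ F, ∀ t' ∈ F, t ≠ t' →
        Disjoint (Finset.offDiag t) (Finset.offDiag t') := by
      intro t ht t' ht' hne'
      rw [Finset.disjoint_left]
      intro p hp hp'
      exact hne' ((hfix t (htwo t ht) p hp).trans (hfix t' (htwo t' ht') p hp').symm)
    rw [hPF, Finset.card_biUnion hdisjF]
    have : ∀ t ∈ F, t.offDiag.card = 2 := by
      intro t ht
      rw [Finset.offDiag_card, htwo t ht]
    rw [Finset.sum_congr rfl this, Finset.sum_const, smul_eq_mul, hk, hF]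
    ring
  -- conclusion
  rw [hHAB, Finset.card_union_of_disjoint hdisj, hcardA, hcardB, hPcard]
  ring
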